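/- Let k ≥ 1 and s ≥ 2 be integers and let F be a family of k-element subsets of [n] which does not contain s pairwise disjoint sets. Then (s−1) · |σ_{k−1}(F)| ≥ |F|. -/

import Mathlib

open scoped Classical

/-- The `ℓ`-shadow of a family `F` of subsets of `Fin n`: all `ℓ`-element sets contained
in some member of `F`. -/
noncomputable def shadow' (n ℓ : ℕ) (F : Finset (Finset (Fin n))) : Finset (Finset (Fin n)) :=
  Finset.univ.filter fun G : Finset (Fin n) => G.card = ℓ ∧ ∃ A ∈ F, G ⊆ A

namespace Frankl

open Finset UV
open scoped FinsetFamily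

/-- No `s` pairwise disjoint members. -/
def NoMat (s : ℕ) (F : Finset (Finset ℕ)) : Prop :=
  ¬ ∃ M : Finset (Finset ℕ), M ⊆ F ∧ M.card = s ∧
      (∀ e ∈ M, ∀ f ∈ M, e ≠ f → Disjoint e f)

/-- The family is closed under left-shifts. -/
def ShiftedF (F : Finset (Finset ℕ)) : Prop :=
  ∀ i j A, i < j → A ∈ F → j ∈ A → i ∉ A → insert i (A.erase j) ∈ F

lemma NoMat.mono {s : ℕ} {F G : Finset (Finset ℕ)} (hGF : G ⊆ F) (h : NoMat s F) :
    NoMat s G := by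
  rintro ⟨M, hM, hc, hd⟩
  exact h ⟨M, hM.trans hGF, hc, hd⟩

lemma union_sdiff_singleton {a b : ℕ} (hab : a ≠ b) (A : Finset ℕ) :
    (A ∪ {a}) \ {b} = insert a (A.erase b) := by
  ext x
  simp only [mem_sdiff, mem_union, mem_singleton, mem_insert, mem_erase]
  constructor
  · rintro ⟨h1 | rfl, h2⟩
    exacts [Or.inr ⟨h2, h1⟩, Or.inl rfl]
  · rintro (rfl | ⟨h1, h2⟩)
    exacts [⟨Or.inr rfl, hab⟩, ⟨Or.inl h2, h1⟩]

lemma compress_singleton {i j : ℕ} {A : Finset ℕ} (hj : j ∈ A) (hi : i ∉ A) :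
    compress {i} {j} A = insert i (A.erase j) := by
  have hij : i ≠ j := fun h => hi (h ▸ hj)
  rw [compress, if_pos ⟨by simpa using hi, by simpa using hj⟩]
  exact union_sdiff_singleton hij A

lemma NoMat.compression {s i j : ℕ} (hij : i ≠ j) {F : Finset (Finset ℕ)}
    (hne : ∀ A ∈ F, A.Nonempty) (h : NoMat s F) : NoMat s (𝓒 {i} {j} F) := by
  rintro ⟨M, hMC, hMcard, hMdisj⟩
  by_cases hMF : ∀ X ∈ M, X ∈ F
  · exact h ⟨M, hMF, hMcard, hMdisj⟩
  push_neg at hMF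
  obtain ⟨A, hAM, hAF⟩ := hMF
  have hiA : i ∈ A := by
    have := le_of_mem_compression_of_notMem (hMC hAM) hAF
    simpa using this
  have hjA : j ∉ A := by
    have := disjoint_of_mem_compression_of_notMem (hMC hAM) hAF
    simpa [disjoint_singleton_left] using this
  have hA' : insert j (A.erase i) ∈ F := by
    have := sup_sdiff_mem_of_mem_compression_of_notMem (hMC hAM) hAF
    rwa [sup_eq_union, union_sdiff_singleton (Ne.symm hij)] at this
  have hiX : ∀ X ∈ M, X ≠ A → i ∉ X := by
    intro X hX hXA hiX
    exact (disjoint_left.1 (hMdisj X hX A hAM hXA)) hiX hiA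
  have hXF : ∀ X ∈ M, X ≠ A → X ∈ F := by
    intro X hX hXA
    by_contra hXFn
    exact hiX X hX hXA (by simpa using le_of_mem_compression_of_notMem (hMC hX) hXFn)
  have hjswap : ∀ X ∈ M, X ≠ A → j ∈ X → insert i (X.erase j) ∈ F := by
    intro X hX hXA hjX
    have hXmem := hMC hX
    rw [mem_compression] at hXmem
    rcases hXmem with ⟨hX1, hX2⟩ | ⟨hX1, -⟩
    · rwa [compress_singleton hjX (hiX X hX hXA)] at hX2
    · exact absurd (hXF X hX hXA) hX1
  set φ : Finset ℕ → Finset ℕ := fun X =>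
    if X = A then insert j (A.erase i) else if j ∈ X then insert i (X.erase j) else X with hφ
  have hφF : ∀ X ∈ M, φ X ∈ F := by
    intro X hX
    by_cases h1 : X = A
    · simp only [hφ, if_pos h1]; exact hA'
    by_cases h2 : j ∈ X
    · simp only [hφ, if_neg h1, if_pos h2]; exact hjswap X hX h1 h2
    · simp only [hφ, if_neg h1, if_neg h2]; exact hXF X hX h1
  -- pairwise disjointness of images
  have hd1 : ∀ Y ∈ M, Y ≠ A → Disjoint (φ A) (φ Y) := by
    intro Y hY hYA
    simp only [hφ, if_pos rfl, if_neg hYA]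
    by_cases h2 : j ∈ Y
    · rw [if_pos h2]
      rw [disjoint_left]
      intro a ha ha'
      simp only [mem_insert, mem_erase] at ha ha'
      rcases ha with rfl | ⟨hane, haA⟩
      · rcases ha' with h | ⟨hne', -⟩
        exacts [hij h.symm, hne' rfl]
      · rcases ha' with rfl | ⟨-, haY⟩
        exacts [hane rfl, disjoint_left.1 (hMdisj A hAM Y hY (Ne.symm hYA)) haA haY]
    · rw [if_neg h2, disjoint_left]
      intro a ha ha'
      simp only [mem_insert, mem_erase] at ha
      rcases ha with rfl | ⟨-, haA⟩
      exacts [h2 ha', disjoint_left.1 (hMdisj A hAM Y hY (Ne.symm hYA)) haA ha']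
  have hd2 : ∀ X ∈ M, ∀ Y ∈ M, X ≠ A → Y ≠ A → X ≠ Y → Disjoint (φ X) (φ Y) := by
    intro X hX Y hY hXA hYA hXY
    have hdXY := hMdisj X hX Y hY hXY
    simp only [hφ, if_neg hXA, if_neg hYA]
    by_cases h2 : j ∈ X
    · have h3 : j ∉ Y := fun h3 => disjoint_left.1 hdXY h2 h3
      rw [if_pos h2, if_neg h3, disjoint_left]
      intro a ha ha'
      simp only [mem_insert, mem_erase] at ha
      rcases ha with rfl | ⟨-, haX⟩
      exacts [hiX Y hY hYA ha', disjoint_left.1 hdXY haX ha']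
    · rw [if_neg h2]
      by_cases h3 : j ∈ Y
      · rw [if_pos h3, disjoint_left]
        intro a ha ha'
        simp only [mem_insert, mem_erase] at ha'
        rcases ha' with rfl | ⟨-, haY⟩
        exacts [hiX X hX hXA ha, disjoint_left.1 hdXY ha haY]
      · rw [if_neg h3]; exact hdXY
  have hdis : ∀ X ∈ M, ∀ Y ∈ M, X ≠ Y → Disjoint (φ X) (φ Y) := by
    intro X hX Y hY hXY
    by_cases h1 : X = A
    · subst h1; exact hd1 Y hY (Ne.symm hXY)
    by_cases h2 : Y = A
    · subst h2; exact (hd1 X hX h1).symm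
    · exact hd2 X hX Y hY h1 h2 hXY
  have hinj : Set.InjOn φ M := by
    intro X hX Y hY hEq
    by_contra hne'
    have := hdis X hX Y hY hne'
    rw [hEq, disjoint_self] at this
    exact (hne _ (hφF Y hY)).ne_empty (by simpa using this)
  refine h ⟨M.image φ, ?_, ?_, ?_⟩
  · intro B hB
    obtain ⟨X, hX, rfl⟩ := mem_image.1 hB
    exact hφF X hX
  · rw [card_image_of_injOn hinj, hMcard]
  · intro e he f hf hef
    obtain ⟨X, hX, rfl⟩ := mem_image.1 he
    obtain ⟨Y, hY, rfl⟩ := mem_image.1 hf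
    exact hdis X hX Y hY (fun h => hef (by rw [h]))

/-- A measure that strictly decreases under non-trivial left-compression. -/
def fMeasure (F : Finset (Finset ℕ)) : ℕ := ∑ A ∈ F, ∑ a ∈ A, 2 ^ a

lemma fMeasure_compression_lt {i j : ℕ} (hij : i < j) {F : Finset (Finset ℕ)}
    (a : 𝓒 ({i} : Finset ℕ) {j} F ≠ F) : fMeasure (𝓒 {i} {j} F) < fMeasure F := by
  have hmax : ({i} : Finset ℕ).max' ⟨i, mem_singleton_self i⟩ <
      ({j} : Finset ℕ).max' ⟨j, mem_singleton_self j⟩ := by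
    simpa [max'_singleton] using hij
  rw [compression] at a ⊢
  have q : ∀ Q ∈ {A ∈ F | compress {i} {j} A ∉ F}, compress {i} {j} Q ≠ Q := by
    simp_rw [mem_filter]
    intro Q hQ h
    rw [h] at hQ
    exact hQ.2 hQ.1
  have uA : {A ∈ F | compress {i} {j} A ∈ F} ∪ {A ∈ F | compress {i} {j} A ∉ F} = F :=
    filter_union_filter_not_eq _ _
  have ne₂ : {A ∈ F | compress {i} {j} A ∉ F}.Nonempty := by
    refine nonempty_iff_ne_empty.2 fun z => a ?_
    rw [filter_image, z, image_empty, union_empty]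
    rwa [z, union_empty] at uA
  rw [fMeasure, fMeasure, sum_union compress_disjoint]
  conv_rhs => rw [← uA]
  rw [sum_union (disjoint_filter_filter_not _ _ _), add_lt_add_iff_left, filter_image,
    sum_image compress_injOn]
  refine sum_lt_sum_of_nonempty ne₂ fun A hA => ?_
  rw [geomSum_lt_geomSum_iff_toColex_lt_toColex le_rfl]
  exact toColex_compress_lt_toColex hmax (q _ hA)

lemma compress_subset_range {i j n : ℕ} (hij : i < j) {A : Finset ℕ} (hA : A ⊆ range n) :
    compress ({i} : Finset ℕ) {j} A ⊆ range n := by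
  by_cases hc : Disjoint ({i} : Finset ℕ) A ∧ ({j} : Finset ℕ) ≤ A
  · rw [compress, if_pos hc]
    intro x hx
    rw [sup_eq_union, mem_sdiff, mem_union, mem_singleton] at hx
    rcases hx.1 with h | rfl
    · exact hA h
    · have hjn : j ∈ range n := hA (singleton_subset_iff.1 hc.2)
      rw [mem_range] at hjn ⊢
      omega
  · rw [compress, if_neg hc]; exact hA

lemma exists_shifted {n k s : ℕ} (hk : 1 ≤ k) (F : Finset (Finset ℕ))
    (hg : ∀ A ∈ F, A ⊆ range n) (hc : ∀ A ∈ F, A.card = k) (hm : NoMat s F) :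
    ∃ G : Finset (Finset ℕ), (∀ A ∈ G, A ⊆ range n) ∧ (∀ A ∈ G, A.card = k) ∧
      NoMat s G ∧ ShiftedF G ∧ G.card = F.card ∧ (∂ G).card ≤ (∂ F).card := by
  by_cases hsh : ShiftedF F
  · exact ⟨F, hg, hc, hm, hsh, rfl, le_rfl⟩
  · simp only [ShiftedF, not_forall] at hsh
    obtain ⟨i, j, A, hij, hAF, hjA, hiA, hnotin⟩ := hsh
    have hAC : A ∉ 𝓒 ({i} : Finset ℕ) {j} F := by
      intro hAC
      rw [mem_compression] at hAC
      rcases hAC with ⟨-, h2⟩ | ⟨h1, -⟩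
      · rw [compress_singleton hjA hiA] at h2; exact hnotin h2
      · exact h1 hAF
    have hCne : 𝓒 ({i} : Finset ℕ) {j} F ≠ F := fun hEq => hAC (hEq.symm ▸ hAF)
    have hmeas : fMeasure (𝓒 {i} {j} F) < fMeasure F := fMeasure_compression_lt hij hCne
    have hgC : ∀ B ∈ 𝓒 ({i} : Finset ℕ) {j} F, B ⊆ range n := by
      intro B hB
      rw [mem_compression] at hB
      rcases hB with ⟨h1, -⟩ | ⟨-, b, hb, rfl⟩
      · exact hg B h1
      · exact compress_subset_range hij (hg b hb)
    have hcC : ∀ B ∈ 𝓒 ({i} : Finset ℕ) {j} F, B.card = k := by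
      intro B hB
      rw [mem_compression] at hB
      rcases hB with ⟨h1, -⟩ | ⟨-, b, hb, rfl⟩
      · exact hc B h1
      · rw [card_compress (by simp)]; exact hc b hb
    have hmC : NoMat s (𝓒 ({i} : Finset ℕ) {j} F) :=
      hm.compression hij.ne (fun A hA => card_pos.1 (by rw [hc A hA]; omega))
    have huv : ∀ x ∈ ({i} : Finset ℕ), ∃ y ∈ ({j} : Finset ℕ),
        IsCompressed (({i} : Finset ℕ).erase x) (({j} : Finset ℕ).erase y) F := by
      intro x hx
      rw [mem_singleton] at hx
      subst hx
      refine ⟨j, mem_singleton_self j, ?_⟩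
      rw [erase_singleton, erase_singleton]
      exact isCompressed_self _ _
    obtain ⟨G, g1, g2, g3, g4, g5, g6⟩ := exists_shifted hk (𝓒 {i} {j} F) hgC hcC hmC
    exact ⟨G, g1, g2, g3, g4, g5.trans (card_compression _ _ _),
      g6.trans (card_shadow_compression_le _ _ huv)⟩
termination_by fMeasure F
decreasing_by exact hmeas

/-- Local LYM-type counting bound. -/
lemma lym_count {N k : ℕ} (hk : 1 ≤ k) {F : Finset (Finset ℕ)}
    (hg : ∀ A ∈ F, A ⊆ range N) (hc : ∀ A ∈ F, A.card = k) :
    F.card * k ≤ (∂ F).card * (N - k + 1) := by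
  rcases F.eq_empty_or_nonempty with rfl | ⟨A0, hA0⟩
  · simp
  have hkN : k ≤ N := by
    have := card_le_card (hg A0 hA0)
    rwa [hc A0 hA0, card_range] at this
  have hcount : (F.sigma fun A => A).card = F.card * k := by
    rw [card_sigma]
    rw [Finset.sum_congr rfl (fun A hA => hc A hA), sum_const, smul_eq_mul]
  have htarget : ((∂ F).sigma fun B => range N \ B).card = (∂ F).card * (N - k + 1) := by
    rw [card_sigma]
    have : ∀ B ∈ ∂ F, (range N \ B).card = N - k + 1 := by
      intro B hB
      rw [mem_shadow_iff] at hB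
      obtain ⟨A, hA, x, hx, rfl⟩ := hB
      rw [card_sdiff_of_subset ((erase_subset _ _).trans (hg A hA)), card_range,
        card_erase_of_mem hx, hc A hA]
      omega
    rw [Finset.sum_congr rfl this, sum_const, smul_eq_mul]
  rw [← hcount, ← htarget]
  apply card_le_card_of_injOn (fun p => ⟨p.1.erase p.2, p.2⟩)
  · rintro ⟨A, x⟩ hp
    rw [mem_coe, mem_sigma] at hp
    obtain ⟨hA, hx⟩ := hp
    rw [mem_coe, mem_sigma]
    exact ⟨erase_mem_shadow hA hx, mem_sdiff.2 ⟨hg A hA hx, notMem_erase _ _⟩⟩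
  · rintro ⟨A, x⟩ hp ⟨B, y⟩ hq h
    rw [mem_coe, mem_sigma] at hp hq
    obtain ⟨h1, h2⟩ := Sigma.mk.inj_iff.1 h
    obtain rfl := eq_of_heq h2
    have hp2 : x ∈ A := hp.2
    have hq2 : x ∈ B := hq.2
    have hAB : A = B := by rw [← insert_erase hp2, ← insert_erase hq2, h1]
    rw [hAB]

lemma aux (s : ℕ) (hs2 : 2 ≤ s) : ∀ n k : ℕ, 1 ≤ k → ∀ F : Finset (Finset ℕ),
    (∀ A ∈ F, A ⊆ range n) → (∀ A ∈ F, A.card = k) → ShiftedF F → NoMat s F →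
    F.card ≤ (s - 1) * (∂ F).card := by
  intro n
  induction n with
  | zero =>
    intro k hk F hg hc _ _
    have : F = ∅ := by
      rw [eq_empty_iff_forall_notMem]
      intro A hA
      have h1 := hg A hA
      rw [range_zero, subset_empty] at h1
      have := hc A hA
      rw [h1, card_empty] at this
      omega
    simp [this]
  | succ n ih =>
    intro k hk F hg hc hsh hm
    rcases eq_or_lt_of_le hk with hk1 | hk2
    · -- k = 1
      rcases F.eq_empty_or_nonempty with rfl | ⟨A, hA⟩
      · simp
      have hempty : (∅ : Finset ℕ) ∈ ∂ F := by
        obtain ⟨a, ha⟩ := card_eq_one.1 (show A.card = 1 by rw [hc A hA, ← hk1])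
        subst ha
        exact mem_shadow_iff.2 ⟨{a}, hA, a, mem_singleton_self a, erase_singleton a⟩
      have hFcard : F.card ≤ s - 1 := by
        by_contra hcon
        push_neg at hcon
        obtain ⟨M, hM, hMcard⟩ := exists_subset_card_eq (show s ≤ F.card by omega)
        refine hm ⟨M, hM, hMcard, ?_⟩
        intro e he f hf hef
        obtain ⟨x, hx⟩ := card_eq_one.1 ((hc e (hM he)).trans hk1.symm)
        obtain ⟨y, hy⟩ := card_eq_one.1 ((hc f (hM hf)).trans hk1.symm)
        subst hx; subst hy
        rw [disjoint_singleton]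
        intro h; exact hef (by rw [h])
      calc F.card ≤ s - 1 := hFcard
        _ = (s - 1) * 1 := (mul_one _).symm
        _ ≤ (s - 1) * (∂ F).card :=
            Nat.mul_le_mul_left _ (card_pos.2 ⟨∅, hempty⟩)
    · by_cases hbig : s * k ≤ n + 1
      · -- splitting case; k ≥ 2
        set F0 := F.filter (fun A => n ∉ A) with hF0def
        set F1 := (F.filter (fun A => n ∈ A)).image (fun A => A.erase n) with hF1def
        have hF1card : F1.card = (F.filter (fun A => n ∈ A)).card := by
          rw [hF1def]
          apply card_image_of_injOn
          intro A hA B hB hAB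
          rw [mem_coe, mem_filter] at hA hB
          have hAB' : A.erase n = B.erase n := hAB
          rw [← insert_erase hA.2, ← insert_erase hB.2, hAB']
        have hsplit : F.card = F0.card + F1.card := by
          rw [hF1card, hF0def]
          rw [add_comm]
          exact (card_filter_add_card_filter_not (p := fun A => n ∈ A)).symm
        -- properties of F0
        have hg0 : ∀ A ∈ F0, A ⊆ range n := by
          intro A hA
          rw [hF0def, mem_filter] at hA
          intro x hx
          have := hg A hA.1 hx
          rw [mem_range] at this ⊢
          rcases Nat.lt_succ_iff_lt_or_eq.1 this with h | rfl
          · exact h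
          · exact absurd hx hA.2
        have hc0 : ∀ A ∈ F0, A.card = k := fun A hA => hc A (mem_filter.1 hA).1
        have hsh0 : ShiftedF F0 := by
          intro i j A hij hA hjA hiA
          rw [hF0def, mem_filter] at hA ⊢
          refine ⟨hsh i j A hij hA.1 hjA hiA, ?_⟩
          have hjn : j < n := by
            have := mem_range.1 (hg A hA.1 hjA)
            rcases Nat.lt_succ_iff_lt_or_eq.1 this with h | rfl
            · exact h
            · exact absurd hjA hA.2
          simp only [mem_insert, mem_erase]
          rintro (rfl | ⟨-, hnA⟩)
          · omega
          · exact hA.2 hnA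
        have hm0 : NoMat s F0 := hm.mono (filter_subset _ _)
        -- properties of F1
        have hmem1 : ∀ B ∈ F1, n ∉ B ∧ insert n B ∈ F := by
          intro B hB
          rw [hF1def, mem_image] at hB
          obtain ⟨A, hA, rfl⟩ := hB
          rw [mem_filter] at hA
          exact ⟨notMem_erase _ _, by rw [insert_erase hA.2]; exact hA.1⟩
        have hg1 : ∀ B ∈ F1, B ⊆ range n := by
          intro B hB
          rw [hF1def, mem_image] at hB
          obtain ⟨A, hA, rfl⟩ := hB
          rw [mem_filter] at hA
          intro x hx
          rw [mem_erase] at hx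
          have := mem_range.1 (hg A hA.1 hx.2)
          rw [mem_range]
          omega
        have hc1 : ∀ B ∈ F1, B.card = k - 1 := by
          intro B hB
          rw [hF1def, mem_image] at hB
          obtain ⟨A, hA, rfl⟩ := hB
          rw [mem_filter] at hA
          rw [card_erase_of_mem hA.2, hc A hA.1]
        have hsh1 : ShiftedF F1 := by
          intro i j B hij hB hjB hiB
          obtain ⟨hnB, hins⟩ := hmem1 B hB
          have hjn : j < n := mem_range.1 (hg1 B hB hjB)
          have hin : i < n := by omega
          have hA' : insert i ((insert n B).erase j) ∈ F :=
            hsh i j (insert n B) hij hins (mem_insert_of_mem hjB)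
              (by simp only [mem_insert]; rintro (rfl | h); exacts [by omega, hiB h])
          have heq : insert i ((insert n B).erase j) = insert n (insert i (B.erase j)) := by
            rw [erase_insert_of_ne (by omega : n ≠ j)]
            rw [Finset.insert_comm]
          rw [heq] at hA'
          rw [hF1def, mem_image]
          refine ⟨insert n (insert i (B.erase j)), mem_filter.2 ⟨hA', mem_insert_self _ _⟩, ?_⟩
          rw [erase_insert]
          simp only [mem_insert, mem_erase]
          rintro (rfl | ⟨-, h⟩)
          · omega
          · exact hnB h
        have hm1 : NoMat s F1 := by
          rintro ⟨M, hM1, hMcard, hMdisj⟩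
          set U := M.biUnion (fun B => B) with hUdef
          have hUcard : U.card = s * (k - 1) := by
            rw [hUdef, card_biUnion hMdisj]
            rw [Finset.sum_congr rfl (fun B hB => hc1 B (hM1 hB)), sum_const, smul_eq_mul, hMcard]
          have hUsub : U ⊆ range (n + 1) := by
            intro x hx
            rw [hUdef, mem_biUnion] at hx
            obtain ⟨B, hB, hxB⟩ := hx
            exact range_subset_range.2 (by omega) (hg1 B (hM1 hB) hxB)
          have hTcard : (range (n + 1) \ U).card = n + 1 - s * (k - 1) := by
            rw [card_sdiff_of_subset hUsub, card_range, hUcard]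
          have hmulsplit : s * (k - 1) + s = s * k := by
            have hkk : k - 1 + 1 = k := by omega
            calc s * (k - 1) + s = s * ((k - 1) + 1) := by ring
              _ = s * k := by rw [hkk]
          have hsT : s ≤ (range (n + 1) \ U).card := by
            rw [hTcard]; omega
          obtain ⟨T', hT'sub, hT'card⟩ := exists_subset_card_eq hsT
          have e : {x // x ∈ M} ≃ {x // x ∈ T'} :=
            Finset.equivOfCardEq (hMcard.trans hT'card.symm)
          have hTprop : ∀ x ∈ T', x < n + 1 ∧ x ∉ U := by
            intro x hx
            have := hT'sub hx
            rw [mem_sdiff, mem_range] at this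
            exact this
          have hBU : ∀ B ∈ M, B ⊆ U := by
            intro B hB
            exact subset_biUnion_of_mem (fun B => B) hB
          have hmemF : ∀ B : {x // x ∈ M}, insert (e B : ℕ) (B : Finset ℕ) ∈ F := by
            intro B
            obtain ⟨hnB, hins⟩ := hmem1 B.1 (hM1 B.2)
            have hx := hTprop (e B : ℕ) (e B).2
            have hxB : (e B : ℕ) ∉ (B : Finset ℕ) := fun h => hx.2 (hBU B.1 B.2 h)
            rcases Nat.lt_succ_iff_lt_or_eq.1 hx.1 with hlt | heq
            · have := hsh (e B : ℕ) n (insert n B.1) hlt hins (mem_insert_self _ _)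
                (by simp only [mem_insert]; rintro (h | h); exacts [absurd h (by omega), hxB h])
              rwa [erase_insert hnB] at this
            · rw [heq]; exact hins
          have hdisj' : ∀ B B' : {x // x ∈ M}, B ≠ B' →
              Disjoint (insert (e B : ℕ) (B : Finset ℕ)) (insert (e B' : ℕ) (B' : Finset ℕ)) := by
            intro B B' hBB'
            have hne : (e B : ℕ) ≠ (e B' : ℕ) := by
              intro h
              exact hBB' (e.injective (Subtype.coe_injective h))
            have hvalne : (B : Finset ℕ) ≠ (B' : Finset ℕ) := by
              intro h; exact hBB' (Subtype.coe_injective h)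
            have hd := hMdisj B.1 B.2 B'.1 B'.2 hvalne
            rw [disjoint_left]
            intro a ha ha'
            rw [mem_insert] at ha ha'
            rcases ha with rfl | ha
            · rcases ha' with h | h
              exacts [hne h, (hTprop _ (e B).2).2 (hBU B'.1 B'.2 h)]
            · rcases ha' with rfl | h
              exacts [(hTprop _ (e B').2).2 (hBU B.1 B.2 ha), disjoint_left.1 hd ha h]
          set M' := M.attach.image (fun B => insert (e B : ℕ) (B : Finset ℕ)) with hM'def
          have hM'inj : Set.InjOn (fun B : {x // x ∈ M} => insert (e B : ℕ) (B : Finset ℕ))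
              M.attach := by
            intro B hB B' hB' hEq
            have hEq' : insert (e B : ℕ) (B : Finset ℕ) = insert (e B' : ℕ) (B' : Finset ℕ) := hEq
            by_contra hne'
            have := hdisj' B B' hne'
            rw [hEq', disjoint_self] at this
            have : (e B' : ℕ) ∈ (∅ : Finset ℕ) := by
              rw [← (by simp only [bot_eq_empty] at this; exact this : insert (e B' : ℕ) (B' : Finset ℕ) = ∅)]
              exact mem_insert_self _ _
            simp at this
          refine hm ⟨M', ?_, ?_, ?_⟩
          · intro B hB
            rw [hM'def, mem_image] at hB
            obtain ⟨B', -, rfl⟩ := hB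
            exact hmemF B'
          · rw [hM'def, card_image_of_injOn hM'inj, card_attach, hMcard]
          · intro a ha b hb hab
            rw [hM'def, mem_image] at ha hb
            obtain ⟨B, -, rfl⟩ := ha
            obtain ⟨B', -, rfl⟩ := hb
            exact hdisj' B B' (fun h => hab (by rw [h]))
        -- IH applications
        have h0 := ih k hk F0 hg0 hc0 hsh0 hm0
        have h1 := ih (k - 1) (by omega) F1 hg1 hc1 hsh1 hm1
        -- shadow inequality
        have hsub0 : ∂ F0 ⊆ (∂ F).filter (fun B => n ∉ B) := by
          intro B hB
          rw [mem_shadow_iff] at hB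
          obtain ⟨A, hA, x, hx, rfl⟩ := hB
          rw [hF0def, mem_filter] at hA
          rw [mem_filter]
          refine ⟨erase_mem_shadow hA.1 hx, ?_⟩
          rw [mem_erase]
          rintro ⟨-, h⟩
          exact hA.2 h
        have hsub1 : (∂ F1).image (insert n) ⊆ (∂ F).filter (fun B => n ∈ B) := by
          intro B hB
          rw [mem_image] at hB
          obtain ⟨C, hC, rfl⟩ := hB
          rw [mem_shadow_iff] at hC
          obtain ⟨D, hD, x, hx, rfl⟩ := hC
          obtain ⟨hnD, hins⟩ := hmem1 D hD
          have hxn : x ≠ n := fun h => hnD (h ▸ hx)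
          have heq : insert n (D.erase x) = (insert n D).erase x := by
            rw [erase_insert_of_ne (Ne.symm hxn)]
          rw [mem_filter, heq]
          exact ⟨erase_mem_shadow hins (mem_insert_of_mem hx), by
            rw [mem_erase]; exact ⟨Ne.symm hxn, mem_insert_self _ _⟩⟩
        have hinj1 : Set.InjOn (insert n) ((∂ F1 : Finset (Finset ℕ)) : Set (Finset ℕ)) := by
          intro B hB B' hB' hEq
          have hnB : n ∉ B := by
            rw [mem_coe, mem_shadow_iff] at hB
            obtain ⟨D, hD, x, hx, rfl⟩ := hB
            intro h
            exact absurd (mem_range.1 (hg1 D hD (mem_of_mem_erase h))) (lt_irrefl n)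
          have hnB' : n ∉ B' := by
            rw [mem_coe, mem_shadow_iff] at hB'
            obtain ⟨D, hD, x, hx, rfl⟩ := hB'
            intro h
            exact absurd (mem_range.1 (hg1 D hD (mem_of_mem_erase h))) (lt_irrefl n)
          rw [← erase_insert hnB, ← erase_insert hnB', hEq]
        have hshadow : (∂ F0).card + (∂ F1).card ≤ (∂ F).card := by
          have c0 : (∂ F0).card ≤ ((∂ F).filter (fun B => n ∉ B)).card := card_le_card hsub0
          have c1 : (∂ F1).card ≤ ((∂ F).filter (fun B => n ∈ B)).card := by
            rw [← card_image_of_injOn hinj1]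
            exact card_le_card hsub1
          have := card_filter_add_card_filter_not (s := ∂ F) (p := fun B => n ∈ B)
          omega
        calc F.card = F0.card + F1.card := hsplit
          _ ≤ (s - 1) * (∂ F0).card + (s - 1) * (∂ F1).card := by omega
          _ = (s - 1) * ((∂ F0).card + (∂ F1).card) := by ring
          _ ≤ (s - 1) * (∂ F).card := Nat.mul_le_mul_left _ hshadow
      · -- LYM case
        have hlym := lym_count hk hg hc
        have hle : n + 1 - k + 1 ≤ (s - 1) * k := by
          have h1 : (s - 1) * k + k = s * k := by
            have : s - 1 + 1 = s := by omega
            calc (s - 1) * k + k = ((s - 1) + 1) * k := by ring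
              _ = s * k := by rw [this]
          have h2 : k ≤ (s - 1) * k := Nat.le_mul_of_pos_left k (by omega)
          omega
        have : F.card * k ≤ ((s - 1) * (∂ F).card) * k := by
          calc F.card * k ≤ (∂ F).card * (n + 1 - k + 1) := hlym
            _ ≤ (∂ F).card * ((s - 1) * k) := Nat.mul_le_mul_left _ hle
            _ = ((s - 1) * (∂ F).card) * k := by ring
        exact Nat.le_of_mul_le_mul_right this (by omega)

end Frankl

/-- **Frankl's shadow inequality.** If `k ≥ 1`, `s ≥ 2` and `F` is a family of
`k`-subsets of `[n]` containing no `s` pairwise disjoint sets, then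
`(s - 1) · |σ_{k-1}(F)| ≥ |F|`. -/
theorem frankl_shadow_inequality (k s n : ℕ) (hk : 1 ≤ k) (hs : 2 ≤ s)
    (F : Finset (Finset (Fin n))) (hF : ∀ A ∈ F, A.card = k)
    (hyp : ¬ ∃ M : Finset (Finset (Fin n)), M ⊆ F ∧ M.card = s ∧
      (∀ e ∈ M, ∀ f ∈ M, e ≠ f → Disjoint e f)) :
    F.card ≤ (s - 1) * (shadow' n (k - 1) F).card := by
  classical
  open Finset Frankl in
  open scoped FinsetFamily in
  exact by
    set e : Fin n ↪ ℕ := Fin.valEmbedding with hedef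
    set F' : Finset (Finset ℕ) := F.image (fun A => A.map e) with hF'def
    have hmapinj : Function.Injective (fun A : Finset (Fin n) => A.map e) :=
      fun A B h => Finset.map_injective e h
    have hcard : F'.card = F.card := card_image_of_injective _ hmapinj
    have hg' : ∀ B ∈ F', B ⊆ Finset.range n := by
      intro B hB
      rw [hF'def, mem_image] at hB
      obtain ⟨A, hA, rfl⟩ := hB
      intro x hx
      rw [mem_map] at hx
      obtain ⟨a, -, rfl⟩ := hx
      exact mem_range.2 a.isLt
    have hc' : ∀ B ∈ F', B.card = k := by
      intro B hB
      rw [hF'def, mem_image] at hB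
      obtain ⟨A, hA, rfl⟩ := hB
      rw [card_map]
      exact hF A hA
    have hm' : Frankl.NoMat s F' := by
      rintro ⟨M', hM'F', hM'card, hM'disj⟩
      set M : Finset (Finset (Fin n)) := F.filter (fun A => A.map e ∈ M') with hMdef
      have himg : M.image (fun A => A.map e) = M' := by
        apply Subset.antisymm
        · intro B hB
          rw [mem_image] at hB
          obtain ⟨A, hA, rfl⟩ := hB
          rw [hMdef, mem_filter] at hA
          exact hA.2
        · intro B hB
          have hBF' := hM'F' hB
          rw [hF'def, mem_image] at hBF'
          obtain ⟨A, hA, rfl⟩ := hBF'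
          exact mem_image.2 ⟨A, mem_filter.2 ⟨hA, hB⟩, rfl⟩
      have hMcard : M.card = s := by
        rw [← hM'card, ← himg, card_image_of_injective _ hmapinj]
      refine hyp ⟨M, filter_subset _ _, hMcard, ?_⟩
      intro a ha b hb hab
      have h1 : a.map e ∈ M' := by rw [← himg]; exact mem_image_of_mem _ ha
      have h2 : b.map e ∈ M' := by rw [← himg]; exact mem_image_of_mem _ hb
      have h3 : a.map e ≠ b.map e := fun h => hab (Finset.map_injective e h)
      exact (Finset.disjoint_map e).1 (hM'disj _ h1 _ h2 h3)
    obtain ⟨G, g1, g2, g3, g4, g5, g6⟩ := Frankl.exists_shifted hk F' hg' hc' hm'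
    have hG := Frankl.aux s hs n k hk G g1 g2 g4 g3
    have hsub : ∂ F' ⊆ (shadow' n (k - 1) F).image (fun B => B.map e) := by
      intro B hB
      rw [mem_shadow_iff] at hB
      obtain ⟨C, hC, x, hx, rfl⟩ := hB
      rw [hF'def, mem_image] at hC
      obtain ⟨A, hA, rfl⟩ := hC
      rw [mem_map] at hx
      obtain ⟨a, ha, rfl⟩ := hx
      rw [← Finset.map_erase]
      refine mem_image_of_mem _ ?_
      rw [shadow', mem_filter]
      exact ⟨mem_univ _, by rw [card_erase_of_mem ha, hF A hA], A, hA, erase_subset _ _⟩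
    have hshadcard : (∂ F').card ≤ (shadow' n (k - 1) F).card :=
      (card_le_card hsub).trans card_image_le
    calc F.card = F'.card := hcard.symm
      _ = G.card := g5.symm
      _ ≤ (s - 1) * (∂ G).card := hG
      _ ≤ (s - 1) * (∂ F').card := Nat.mul_le_mul_left _ g6
      _ ≤ (s - 1) * (shadow' n (k - 1) F).card := Nat.mul_le_mul_left _ hshadcard
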